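/- Let J ⊂ S be a quasi-stable monomial ideal with Pommaret basis P(J) = {x^{α(1)},…,x^{α(m)}} and G = {f_{α(1)},…,f_{α(m)}} a P(J)-marked basis, and let G_Syz = {S_{k;i}} ⊂ S^m_d be the set of syzygies S_{k;i} = x_i e_k − Σ_l P_l^{k;i} e_l. Then for every degree s the set G_Syz^{(s)} = {x^δ S_{k;i} : every variable of x^δ is ≤ x_i, deg(x^δ x_i e_k) = s} generates the A-module Syz(G)_s of syzygies of G of degree s. -/

import Mathlib

open MvPolynomial

namespace MB

/-- Exponent (multi-index) of a term in the variables `x_0, …, x_n`. -/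
abbrev Exp (n : ℕ) := Fin (n+1) →₀ ℕ

variable {n : ℕ}

/-- Total degree of a term. -/
def degE (α : Exp n) : ℕ := α.sum fun _ e => e

/-- `x_i` is a multiplicative variable for the term `x^α`, i.e. `x_i ≤ min(x^α)`. -/
def mult (α : Exp n) (i : Fin (n+1)) : Prop := ∀ j ∈ α.support, i ≤ j

/-- Every variable occurring in `x^δ` is multiplicative for `x^α`. -/
def multExp (α δ : Exp n) : Prop := ∀ i ∈ δ.support, mult α i

/-- Pommaret cone of a term. -/
def pommaretCone (α : Exp n) : Set (Exp n) := {γ | ∃ δ, multExp α δ ∧ γ = α + δ}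

/-- A set of terms is (the set of terms of) a monomial ideal. -/
def IsMonomialIdeal (T : Set (Exp n)) : Prop := ∀ α ∈ T, ∀ β, α + β ∈ T

/-- `P` is a Pommaret basis of the set of terms `T`: the terms of `T` are the
disjoint union of the Pommaret cones of the elements of `P`. -/
def IsPommaretBasis (P : Finset (Exp n)) (T : Set (Exp n)) : Prop :=
  (∀ γ, γ ∈ T ↔ ∃ α ∈ P, γ ∈ pommaretCone α) ∧
  ∀ γ : Exp n, ∀ α ∈ P, ∀ β ∈ P, γ ∈ pommaretCone α → γ ∈ pommaretCone β → α = β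

/-- Lexicographic order on terms (with `x_n > … > x_0` significance). -/
def lexLt (η δ : Exp n) : Prop := ∃ i, η i < δ i ∧ ∀ j, i < j → η j = δ j

/-- Terms of the saturation `(J : (x_0,…,x_n)^∞)` of a monomial ideal. -/
def satTerms (T : Set (Exp n)) : Set (Exp n) :=
  {α | ∃ j : ℕ, ∀ β : Exp n, degE β = j → α + β ∈ T}

section ModuleDefs

variable (A : Type*) [CommRing A] {κ : Type*} [Fintype κ] [DecidableEq κ]

/-- The term `x^α e_k` of the free module. -/
noncomputable def termV (α : Exp n) (k : κ) : κ → MvPolynomial (Fin (n+1)) A :=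
  Pi.single k (monomial α 1)

variable {A}

/-- Homogeneity of degree `s` in `S^m_d` (with weight vector `d`). -/
def IsHomogV (d : κ → ℤ) (f : κ → MvPolynomial (Fin (n+1)) A) (s : ℤ) : Prop :=
  ∀ k, ∀ β ∈ (f k).support, (degE β : ℤ) + d k = s

variable (A)

/-- The degree-`s` component `(S^m_d)_s` as an `A`-submodule. -/
noncomputable def homogCompV (d : κ → ℤ) (s : ℤ) :
    Submodule A (κ → MvPolynomial (Fin (n+1)) A) where
  carrier := {f | IsHomogV d f s}
  add_mem' := by
    intro f g hf hg k β hβ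
    rcases Finset.mem_union.mp (MvPolynomial.support_add hβ) with h | h
    · exact hf k β h
    · exact hg k β h
  zero_mem' := by intro k β hβ; simp at hβ
  smul_mem' := by
    intro a f hf k β hβ
    exact hf k β (MvPolynomial.support_smul hβ)

/-- The set `N(U)` of terms of `S^m_d` not belonging to the monomial module `U = ⊕ J^(k) e_k`. -/
def NUTerms (J : κ → Set (Exp n)) : Set (κ → MvPolynomial (Fin (n+1)) A) :=
  {v | ∃ k, ∃ α, α ∉ J k ∧ v = termV A α k}

/-- The degree-`s` part `N(U)_s`. -/
def NUTermsDeg (d : κ → ℤ) (J : κ → Set (Exp n)) (s : ℤ) :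
    Set (κ → MvPolynomial (Fin (n+1)) A) :=
  {v | ∃ k, ∃ α, α ∉ J k ∧ (degE α : ℤ) + d k = s ∧ v = termV A α k}

variable {A}

/-- A `P(U)`-marked set: for each `x^α e_k` with `α ∈ P k`, the element `g α k` has
head term `x^α e_k` (coefficient `1`) and all other terms in `N(U)` of the same degree. -/
def IsMarkedSetV (d : κ → ℤ) (J : κ → Set (Exp n)) (P : κ → Finset (Exp n))
    (g : Exp n → κ → (κ → MvPolynomial (Fin (n+1)) A)) : Prop :=
  ∀ k, ∀ α ∈ P k, ∀ l, ∀ β ∈ ((g α k - termV A α k) l).support,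
    β ∉ J l ∧ (degE β : ℤ) + d l = (degE α : ℤ) + d k

/-- The underlying set of elements of the marked set `G`. -/
def GSet (P : κ → Finset (Exp n)) (g : Exp n → κ → (κ → MvPolynomial (Fin (n+1)) A)) :
    Set (κ → MvPolynomial (Fin (n+1)) A) :=
  {v | ∃ k, ∃ α ∈ P k, v = g α k}

/-- The set `G^(s)` of multiplicative multiples of elements of `G` of degree `s`. -/
def GSdeg (d : κ → ℤ) (P : κ → Finset (Exp n))
    (g : Exp n → κ → (κ → MvPolynomial (Fin (n+1)) A)) (s : ℤ) :
    Set (κ → MvPolynomial (Fin (n+1)) A) :=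
  {v | ∃ k, ∃ α ∈ P k, ∃ δ : Exp n, multExp α δ ∧
    (degE δ : ℤ) + (degE α : ℤ) + d k = s ∧ v = (monomial δ (1:A)) • g α k}

/-- The `S`-submodule `⟨G⟩` generated by the marked set. -/
noncomputable def GmodS (P : κ → Finset (Exp n))
    (g : Exp n → κ → (κ → MvPolynomial (Fin (n+1)) A)) :
    Submodule (MvPolynomial (Fin (n+1)) A) (κ → MvPolynomial (Fin (n+1)) A) :=
  Submodule.span _ (GSet P g)

/-- The degree-`s` component `⟨G⟩_s` as an `A`-submodule. -/
noncomputable def GmodDeg (d : κ → ℤ) (P : κ → Finset (Exp n))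
    (g : Exp n → κ → (κ → MvPolynomial (Fin (n+1)) A)) (s : ℤ) :
    Submodule A (κ → MvPolynomial (Fin (n+1)) A) :=
  (GmodS P g).restrictScalars A ⊓ homogCompV A d s

/-- `G` is a marked basis: `(S^m_d)_s = ⟨G⟩_s ⊕ ⟨N(U)_s⟩^A` for every degree `s`. -/
def MarkedBasisProp (d : κ → ℤ) (J : κ → Set (Exp n)) (P : κ → Finset (Exp n))
    (g : Exp n → κ → (κ → MvPolynomial (Fin (n+1)) A)) : Prop :=
  ∀ s : ℤ,
    homogCompV A d s = GmodDeg d P g s ⊔ Submodule.span A (NUTermsDeg A d J s) ∧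
    GmodDeg d P g s ⊓ Submodule.span A (NUTermsDeg A d J s) = ⊥

/-- One step of the reduction relation `→_G`. -/
def RedStep (P : κ → Finset (Exp n)) (g : Exp n → κ → (κ → MvPolynomial (Fin (n+1)) A))
    (h h' : κ → MvPolynomial (Fin (n+1)) A) : Prop :=
  ∃ k, ∃ α ∈ P k, ∃ η : Exp n, multExp α η ∧
    (h k).coeff (η + α) ≠ 0 ∧
    h' = h - ((h k).coeff (η + α)) • ((monomial η (1:A)) • g α k)

end ModuleDefs

section IdealDefs

variable {A : Type*} [CommRing A]

/-- A `P(J)`-marked set of polynomials. -/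
def IsMarkedSetI (T : Set (Exp n)) (P : Finset (Exp n))
    (g : Exp n → MvPolynomial (Fin (n+1)) A) : Prop :=
  ∀ α ∈ P, ∀ β ∈ (g α - monomial α (1:A)).support, β ∉ T ∧ degE β = degE α

variable (A)

/-- The degree-`s` monomials not in `T`. -/
def NTermsDegI (T : Set (Exp n)) (s : ℕ) : Set (MvPolynomial (Fin (n+1)) A) :=
  {p | ∃ β, β ∉ T ∧ degE β = s ∧ p = monomial β (1:A)}

variable {A}

/-- Degree-`s` part of the ideal generated by the marked set. -/
noncomputable def IdealDegI (P : Finset (Exp n)) (g : Exp n → MvPolynomial (Fin (n+1)) A)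
    (s : ℕ) : Submodule A (MvPolynomial (Fin (n+1)) A) :=
  (Ideal.span (g '' ↑P)).restrictScalars A ⊓ homogeneousSubmodule (Fin (n+1)) A s

/-- A `P(J)`-marked basis of polynomials: `S_s = (G)_s ⊕ ⟨N(J)_s⟩^A` for all `s`. -/
def IsMarkedBasisI (T : Set (Exp n)) (P : Finset (Exp n))
    (g : Exp n → MvPolynomial (Fin (n+1)) A) : Prop :=
  IsMarkedSetI T P g ∧ ∀ s : ℕ,
    homogeneousSubmodule (Fin (n+1)) A s
      = IdealDegI P g s ⊔ Submodule.span A (NTermsDegI A T s) ∧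
    IdealDegI P g s ⊓ Submodule.span A (NTermsDegI A T s) = ⊥

/-- The polynomial `p` involves only multiplicative variables of `x^α`. -/
def multPoly (α : Exp n) (p : MvPolynomial (Fin (n+1)) A) : Prop :=
  ∀ β ∈ p.support, multExp α β

end IdealDefs

section SyzDefs

variable {A : Type*} [CommRing A]

/-- The map `(c_l) ↦ Σ_l c_l f_{α(l)}` whose kernel is `Syz(G)`. -/
noncomputable def syzMap (P : Finset (Exp n)) (g : Exp n → MvPolynomial (Fin (n+1)) A) :
    (↥P → MvPolynomial (Fin (n+1)) A) →ₗ[MvPolynomial (Fin (n+1)) A]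
      MvPolynomial (Fin (n+1)) A where
  toFun c := ∑ l : ↥P, c l * g l.1
  map_add' c c' := by simp [add_mul, Finset.sum_add_distrib]
  map_smul' a c := by simp [Finset.mul_sum, mul_assoc]

/-- Weight vector for the syzygy module: `d_l = deg x^{α(l)}`. -/
def ddeg (P : Finset (Exp n)) : ↥P → ℤ := fun l => (degE l.1 : ℤ)

/-- Terms of the monomial ideal generated by the nonmultiplicative variables of `x^{α(l)}`. -/
def Jsyz (P : Finset (Exp n)) : ↥P → Set (Exp n) :=
  fun l => {β | ∃ i ∈ β.support, ¬ mult (l : Exp n) i}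

open Classical in
/-- The claimed Pommaret basis `{x_i e_l : x_i nonmultiplicative for x^{α(l)}}`. -/
noncomputable def Psyz (P : Finset (Exp n)) : ↥P → Finset (Exp n) := fun l =>
  (Finset.univ.filter fun i : Fin (n+1) => ¬ mult (l : Exp n) i).image
    fun i => Finsupp.single i 1

open Classical in
/-- The syzygy `S_{k;i} = x_i e_k − Σ_l P_l^{k;i} e_l`. -/
noncomputable def Ssyz (P : Finset (Exp n))
    (Pc : ↥P → Fin (n+1) → ↥P → MvPolynomial (Fin (n+1)) A)
    (k : ↥P) (i : Fin (n+1)) : ↥P → MvPolynomial (Fin (n+1)) A :=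
  fun l => (if l = k then (X i : MvPolynomial (Fin (n+1)) A) else 0) - Pc k i l

/-- The set `G_Syz^(s)`. -/
def GSyzDeg (P : Finset (Exp n))
    (Pc : ↥P → Fin (n+1) → ↥P → MvPolynomial (Fin (n+1)) A) (s : ℤ) :
    Set (↥P → MvPolynomial (Fin (n+1)) A) :=
  {v | ∃ k : ↥P, ∃ i : Fin (n+1), ¬ mult (k : Exp n) i ∧ ∃ δ : Exp n,
    (∀ j ∈ δ.support, j ≤ i) ∧ (degE δ : ℤ) + 1 + ddeg P k = s ∧
    v = (monomial δ (1:A)) • Ssyz P Pc k i}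

end SyzDefs

section Aux
variable {n : ℕ}

lemma degE_eq (α : Exp n) : degE α = Finsupp.degree α := rfl

lemma degE_univ (α : Exp n) : degE α = ∑ j : Fin (n+1), α j :=
  Finsupp.sum_fintype _ _ (fun _ => rfl)

lemma degE_add (a b : Exp n) : degE (a + b) = degE a + degE b := by
  simp [degE_univ, Finset.sum_add_distrib]

lemma degE_single (i : Fin (n+1)) : degE (Finsupp.single i 1) = 1 := by
  simp [degE_univ, Finsupp.single_apply]

lemma le_degE (α : Exp n) (j : Fin (n+1)) : α j ≤ degE α := by
  rcases eq_or_ne (α j) 0 with h | h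
  · simp [h]
  · exact Finset.single_le_sum (f := fun i => α i) (fun _ _ => Nat.zero_le _)
      (Finsupp.mem_support_iff.mpr h)

/-- base-(D+1) encoding of an exponent vector -/
def Nval (D : ℕ) (δ : Exp n) : ℕ := ∑ j : Fin (n+1), δ j * (D+1)^(j:ℕ)

lemma geom_aux (D i : ℕ) : ∑ t ∈ Finset.range i, D * (D+1)^t + 1 = (D+1)^i := by
  induction i with
  | zero => simp
  | succ i ih =>
    rw [Finset.sum_range_succ, pow_succ, ← ih]
    ring


lemma Nval_lt_of_lexLt {D : ℕ} {δ' δ : Exp n} (hD : ∀ j, δ' j ≤ D)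
    (h : lexLt δ' δ) : Nval D δ' < Nval D δ := by
  classical
  obtain ⟨i, hi, hagree⟩ := h
  have hsplit : ∀ ε : Exp n, Nval D ε =
      (∑ j ∈ Finset.univ.filter (fun j => i < j), ε j * (D+1)^(j:ℕ)) +
      (∑ j ∈ Finset.univ.filter (fun j => ¬ i < j), ε j * (D+1)^(j:ℕ)) := by
    intro ε
    exact (Finset.sum_filter_add_sum_filter_not _ _ _).symm
  rw [hsplit δ', hsplit δ]
  have hAeq : (∑ j ∈ Finset.univ.filter (fun j => i < j), δ' j * (D+1)^(j:ℕ))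
      = ∑ j ∈ Finset.univ.filter (fun j => i < j), δ j * (D+1)^(j:ℕ) := by
    apply Finset.sum_congr rfl
    intro j hj
    rw [hagree j (Finset.mem_filter.mp hj).2]
  rw [hAeq]
  apply Nat.add_lt_add_left
  have himem : i ∈ Finset.univ.filter (fun j => ¬ i < j) := by simp
  rw [← Finset.add_sum_erase _ _ himem]
  have herase : ∑ j ∈ (Finset.univ.filter (fun j => ¬ i < j)).erase i,
      δ' j * (D+1)^(j:ℕ) + 1 ≤ (D+1)^(i:ℕ) := by
    rw [← geom_aux D i]
    apply Nat.add_le_add_right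
    calc ∑ j ∈ (Finset.univ.filter (fun j => ¬ i < j)).erase i, δ' j * (D+1)^(j:ℕ)
        ≤ ∑ j ∈ (Finset.univ.filter (fun j => ¬ i < j)).erase i, D * (D+1)^(j:ℕ) :=
          Finset.sum_le_sum (fun j _ => Nat.mul_le_mul_right _ (hD j))
      _ = ∑ t ∈ ((Finset.univ.filter (fun j => ¬ i < j)).erase i).image Fin.val,
            D * (D+1)^t := by
          rw [Finset.sum_image]
          intro a _ b _ hab
          exact Fin.val_injective hab
      _ ≤ ∑ t ∈ Finset.range (i:ℕ), D * (D+1)^t := by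
          apply Finset.sum_le_sum_of_subset
          intro t ht
          simp only [Finset.mem_image, Finset.mem_erase, Finset.mem_filter] at ht
          obtain ⟨j, ⟨hji, _, hjle⟩, rfl⟩ := ht
          have : j < i := lt_of_le_of_ne (not_lt.mp hjle) hji
          simpa using this
  have hstep : δ' i * (D+1)^(i:ℕ) + (D+1)^(i:ℕ) ≤ δ i * (D+1)^(i:ℕ) := by
    have : (δ' i + 1) * (D+1)^(i:ℕ) ≤ δ i * (D+1)^(i:ℕ) :=
      Nat.mul_le_mul_right _ hi
    linarith [this]
  have hlast : δ i * (D+1)^(i:ℕ) ≤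
      ∑ j ∈ Finset.univ.filter (fun j => ¬ i < j), δ j * (D+1)^(j:ℕ) :=
    Finset.single_le_sum (f := fun j => δ j * (D+1)^(j:ℕ))
      (fun _ _ => Nat.zero_le _) himem
  omega

lemma lex_trichot (a b : Exp n) : a = b ∨ lexLt a b ∨ lexLt b a := by
  classical
  by_cases h : a = b
  · exact Or.inl h
  · right
    have hs : (Finset.univ.filter (fun j : Fin (n+1) => a j ≠ b j)).Nonempty := by
      by_contra hc
      rw [Finset.not_nonempty_iff_eq_empty] at hc
      apply h
      ext j
      by_contra hj
      have : j ∈ Finset.univ.filter (fun j : Fin (n+1) => a j ≠ b j) := by simp [hj]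
      simp [hc] at this
    set i := (Finset.univ.filter (fun j : Fin (n+1) => a j ≠ b j)).max' hs with hidef
    have himem := (Finset.univ.filter (fun j : Fin (n+1) => a j ≠ b j)).max'_mem hs
    have hine : a i ≠ b i := by simpa using himem
    have hagree : ∀ j, i < j → a j = b j := by
      intro j hj
      by_contra hc
      have : j ∈ Finset.univ.filter (fun j : Fin (n+1) => a j ≠ b j) := by simp [hc]
      exact absurd (Finset.le_max' _ _ this) (not_le.mpr hj)
    rcases lt_or_gt_of_ne hine with h1 | h1
    · exact Or.inl ⟨i, h1, hagree⟩
    · exact Or.inr ⟨i, h1, fun j hj => (hagree j hj).symm⟩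

lemma apply_of_eq {a b : Exp n} (h : a = b) (j : Fin (n+1)) : a j = b j := by rw [h]

/-- Key combinatorial lemma. -/
lemma keyL {η β η' α' : Exp n} (heq : η + β = η' + α')
    (hm : ∀ j ∈ η'.support, ∀ j' ∈ α'.support, j ≤ j')
    (hn : ¬ lexLt η' η) : ∃ ρ, β = α' + ρ := by
  have heq' : ∀ j, η j + β j = η' j + α' j := by
    intro j
    have := apply_of_eq heq j
    simpa [Finsupp.add_apply] using this
  rcases lex_trichot η' η with h | h | h
  · refine ⟨0, ?_⟩
    rw [add_zero]
    have : η + β = η + α' := by rw [heq, h]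
    exact add_left_cancel this
  · exact absurd h hn
  · obtain ⟨i₀, h1, h2⟩ := h
    have hle : α' ≤ β := by
      rw [Finsupp.le_iff]
      intro j hj
      rcases lt_trichotomy i₀ j with hc | hc | hc
      · have := heq' j
        rw [h2 j hc] at this
        omega
      · have := heq' j
        rw [hc] at h1
        omega
      · exfalso
        have hi₀ : i₀ ∈ η'.support := by
          rw [Finsupp.mem_support_iff]
          omega
        exact absurd (hm i₀ hi₀ j hj) (not_le.mpr hc)
    exact ⟨β - α', (add_tsub_cancel_of_le hle).symm⟩

/-- top (maximal) variable of a term -/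
noncomputable def tvar (γ : Exp n) : Fin (n+1) :=
  if h : γ.support.Nonempty then γ.support.max' h else ⟨0, Nat.succ_pos n⟩

/-- the term divided by its top variable -/
noncomputable def mpart (γ : Exp n) : Exp n := γ - Finsupp.single (tvar γ) 1

lemma tvar_mem {γ : Exp n} (h : γ.support.Nonempty) : tvar γ ∈ γ.support := by
  rw [tvar, dif_pos h]
  exact γ.support.max'_mem h

lemma le_tvar {γ : Exp n} (h : γ.support.Nonempty) {j : Fin (n+1)}
    (hj : j ∈ γ.support) : j ≤ tvar γ := by
  rw [tvar, dif_pos h]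
  exact Finset.le_max' _ _ hj

lemma mpart_add {γ : Exp n} (h : γ.support.Nonempty) :
    mpart γ + Finsupp.single (tvar γ) 1 = γ := by
  apply tsub_add_cancel_of_le
  rw [Finsupp.single_le_iff]
  have := tvar_mem h
  rw [Finsupp.mem_support_iff] at this
  omega

lemma mpart_apply_le (γ : Exp n) (j : Fin (n+1)) : mpart γ j ≤ γ j := by
  rw [mpart, Finsupp.tsub_apply]
  exact Nat.sub_le _ _

lemma supp_mpart_le {γ : Exp n} (h : γ.support.Nonempty) {j : Fin (n+1)}
    (hj : j ∈ (mpart γ).support) : j ≤ tvar γ := by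
  apply le_tvar h
  rw [Finsupp.mem_support_iff] at hj ⊢
  have := mpart_apply_le γ j
  omega

lemma tvar_nonmult {γ α : Exp n} {i : Fin (n+1)} (hi : i ∈ γ.support)
    (hnm : ¬ mult α i) : ¬ mult α (tvar γ) := by
  have hne : γ.support.Nonempty := ⟨i, hi⟩
  rw [mult] at hnm
  push_neg at hnm
  obtain ⟨j, hj, hji⟩ := hnm
  intro hc
  exact absurd (hc j hj) (not_le.mpr (lt_of_lt_of_le hji (le_tvar hne hi)))

lemma degE_mpart {γ : Exp n} (h : γ.support.Nonempty) :
    degE (mpart γ) + 1 = degE γ := by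
  conv_rhs => rw [← mpart_add h]
  rw [degE_add, degE_single]


end Aux

section PolyAux

variable {n : ℕ} {A : Type*} [CommRing A]

lemma mem_support_sub {p q : MvPolynomial (Fin (n+1)) A} {β : Exp n}
    (h : β ∈ (p - q).support) : β ∈ p.support ∨ β ∈ q.support := by
  rw [MvPolynomial.mem_support_iff] at h
  rw [MvPolynomial.mem_support_iff, MvPolynomial.mem_support_iff]
  by_contra hc
  push_neg at hc
  rw [MvPolynomial.coeff_sub, hc.1, hc.2, sub_zero] at h
  exact h rfl

lemma g_support_cases {T : Set (Exp n)} {P : Finset (Exp n)}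
    {g : Exp n → MvPolynomial (Fin (n+1)) A} (hset : IsMarkedSetI T P g)
    {α : Exp n} (hα : α ∈ P) {β : Exp n} (hβ : β ∈ (g α).support) :
    β = α ∨ (β ∉ T ∧ degE β = degE α) := by
  classical
  by_cases hb : β = α
  · exact Or.inl hb
  · right
    apply hset α hα
    rw [MvPolynomial.mem_support_iff, MvPolynomial.coeff_sub,
      MvPolynomial.coeff_monomial, if_neg (fun h => hb h.symm), sub_zero]
    exact MvPolynomial.mem_support_iff.mp hβ

lemma g_homog {T : Set (Exp n)} {P : Finset (Exp n)}
    {g : Exp n → MvPolynomial (Fin (n+1)) A} (hset : IsMarkedSetI T P g)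
    {α : Exp n} (hα : α ∈ P) {β : Exp n} (hβ : β ∈ (g α).support) :
    degE β = degE α := by
  rcases g_support_cases hset hα hβ with h | h
  · rw [h]
  · exact h.2

lemma self_mem_cone (α : Exp n) : α ∈ pommaretCone α :=
  ⟨0, fun i hi => by simp at hi, (add_zero α).symm⟩

lemma P_sub_T {T : Set (Exp n)} {P : Finset (Exp n)} (hP : IsPommaretBasis P T)
    {α : Exp n} (hα : α ∈ P) : α ∈ T :=
  (hP.1 α).mpr ⟨α, hα, self_mem_cone α⟩

/-- Claim A : a syzygy with all components multiplicative is zero. -/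
lemma multSyzZero {T : Set (Exp n)} {P : Finset (Exp n)} (hT : IsMonomialIdeal T)
    (hP : IsPommaretBasis P T) {g : Exp n → MvPolynomial (Fin (n+1)) A}
    (hset : IsMarkedSetI T P g) (H : ↥P → MvPolynomial (Fin (n+1)) A)
    (hmult : ∀ l : ↥P, multPoly (l : Exp n) (H l))
    (hker : ∑ l : ↥P, H l * g (l : Exp n) = 0) : H = 0 := by
  classical
  by_contra hne
  have hex : ∃ l : ↥P, H l ≠ 0 := by
    by_contra hc
    push_neg at hc
    exact hne (funext hc)
  set S : Finset (Exp n) := Finset.univ.biUnion (fun l : ↥P => (H l).support) with hS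
  have hSne : S.Nonempty := by
    obtain ⟨l, hl⟩ := hex
    obtain ⟨β, hβ⟩ := MvPolynomial.ne_zero_iff.mp hl
    exact ⟨β, Finset.mem_biUnion.mpr ⟨l, Finset.mem_univ l,
      MvPolynomial.mem_support_iff.mpr hβ⟩⟩
  set D : ℕ := S.sup degE with hD
  have hDb : ∀ η ∈ S, ∀ j, η j ≤ D := fun η hη j =>
    le_trans (le_degE η j) (Finset.le_sup hη)
  obtain ⟨η₀, hη₀S, hη₀max⟩ := S.exists_max_image (Nval D) hSne
  obtain ⟨l₀, -, hη₀⟩ := Finset.mem_biUnion.mp hη₀S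
  set μ : Exp n := η₀ + (l₀ : Exp n) with hμ
  have hnolex : ∀ η ∈ S, ¬ lexLt η₀ η := by
    intro η hη hc
    exact absurd (hη₀max η hη) (not_le.mpr (Nval_lt_of_lexLt (hDb η₀ hη₀S) hc))
  have claim : ∀ l : ↥P, ∀ x ∈ Finset.HasAntidiagonal.antidiagonal μ,
      MvPolynomial.coeff x.1 (H l) * MvPolynomial.coeff x.2 (g (l : Exp n)) ≠ 0 →
      l = l₀ ∧ x.1 = η₀ ∧ x.2 = (l₀ : Exp n) := by
    intro l x hx hne0
    have h1 : x.1 ∈ (H l).support := by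
      rw [MvPolynomial.mem_support_iff]
      intro h; apply hne0; rw [h, zero_mul]
    have h2 : x.2 ∈ (g (l : Exp n)).support := by
      rw [MvPolynomial.mem_support_iff]
      intro h; apply hne0; rw [h, mul_zero]
    have hsum : x.1 + x.2 = μ := Finset.HasAntidiagonal.mem_antidiagonal.mp hx
    have hη₀mult : multExp (l₀ : Exp n) η₀ := hmult l₀ η₀ hη₀
    rcases g_support_cases hset l.2 h2 with hcase | hcase
    · -- head term : use disjointness of cones
      have hc1 : μ ∈ pommaretCone ((l : Exp n)) :=
        ⟨x.1, hmult l x.1 h1, by rw [← hsum, hcase]; exact add_comm _ _⟩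
      have hc2 : μ ∈ pommaretCone ((l₀ : Exp n)) :=
        ⟨η₀, hη₀mult, by rw [hμ]; exact add_comm _ _⟩
      have heq : (l : Exp n) = (l₀ : Exp n) := hP.2 μ _ l.2 _ l₀.2 hc1 hc2
      have hl : l = l₀ := Subtype.ext heq
      refine ⟨hl, ?_, by rw [hcase, heq]⟩
      subst hl
      have : x.1 + x.2 = η₀ + x.2 := by rw [hsum, hμ, hcase]
      exact add_right_cancel this
    · -- tail term : contradiction with the key lemma
      exfalso
      have hx1S : x.1 ∈ S :=
        Finset.mem_biUnion.mpr ⟨l, Finset.mem_univ l, h1⟩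
      obtain ⟨ρ, hρ⟩ := keyL (heq := hsum.trans hμ)
        (hm := fun j hj j' hj' => hη₀mult j hj j' hj') (hn := hnolex x.1 hx1S)
      exact hcase.1 (hρ ▸ hT _ (P_sub_T hP l₀.2) ρ)
  have hcoeffl : ∀ l : ↥P, MvPolynomial.coeff μ (H l * g (l : Exp n)) =
      if l = l₀ then MvPolynomial.coeff η₀ (H l₀) else 0 := by
    intro l
    rw [MvPolynomial.coeff_mul]
    by_cases hl : l = l₀
    · subst hl
      rw [if_pos rfl]
      have hmem : (η₀, (l : Exp n)) ∈ Finset.HasAntidiagonal.antidiagonal μ :=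
        Finset.HasAntidiagonal.mem_antidiagonal.mpr rfl
      rw [Finset.sum_eq_single_of_mem _ hmem]
      · have hcoeffg : MvPolynomial.coeff ((l : Exp n)) (g (l : Exp n)) = 1 := by
          have hdiff := hset (l : Exp n) l.2
          by_cases hz : MvPolynomial.coeff ((l : Exp n))
              (g (l : Exp n) - MvPolynomial.monomial (l : Exp n) (1:A)) = 0
          · have := hz
            rw [MvPolynomial.coeff_sub, MvPolynomial.coeff_monomial, if_pos rfl,
              sub_eq_zero] at this
            exact this
          · exfalso
            have hmem' := MvPolynomial.mem_support_iff.mpr hz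
            exact (hdiff _ hmem').1 (P_sub_T hP l.2)
        rw [hcoeffg, mul_one]
      · intro x hx hxne
        by_contra hne0
        obtain ⟨-, hx1, hx2⟩ := claim l x hx hne0
        exact hxne (Prod.ext hx1 hx2)
    · rw [if_neg hl]
      apply Finset.sum_eq_zero
      intro x hx
      by_contra hne0
      exact hl (claim l x hx hne0).1
  have hzero : (0 : A) = MvPolynomial.coeff η₀ (H l₀) := by
    calc (0 : A) = MvPolynomial.coeff μ (0 : MvPolynomial (Fin (n+1)) A) := by
          rw [MvPolynomial.coeff_zero]
      _ = MvPolynomial.coeff μ (∑ l : ↥P, H l * g (l : Exp n)) := by rw [hker]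
      _ = ∑ l : ↥P, MvPolynomial.coeff μ (H l * g (l : Exp n)) := by
          rw [MvPolynomial.coeff_sum]
      _ = ∑ l : ↥P, if l = l₀ then MvPolynomial.coeff η₀ (H l₀) else 0 := by
          exact Finset.sum_congr rfl (fun l _ => hcoeffl l)
      _ = MvPolynomial.coeff η₀ (H l₀) := by rw [Finset.sum_ite_eq']; simp
  exact (MvPolynomial.mem_support_iff.mp hη₀) hzero.symm

end PolyAux

section HC

variable {n : ℕ} {A : Type*} [CommRing A]

lemma hc_zero_of_degrees {p : MvPolynomial (Fin (n+1)) A} {w : ℕ}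
    (hp : ∀ b ∈ p.support, degE b = w) {u : ℕ} (hu : u ≠ w) :
    homogeneousComponent u p = 0 := by
  apply homogeneousComponent_eq_zero'
  intro d hd
  rw [← degE_eq, hp d hd]
  exact fun h => hu h.symm

lemma hc_mul_homog {p q : MvPolynomial (Fin (n+1)) A} {d : ℕ}
    (hq : ∀ b ∈ q.support, degE b = d) (t : ℕ) :
    homogeneousComponent (t + d) (p * q) = homogeneousComponent t p * q := by
  classical
  apply MvPolynomial.ext
  intro γ
  rw [coeff_homogeneousComponent]
  by_cases h : Finsupp.degree γ = t + d
  · rw [if_pos h, MvPolynomial.coeff_mul, MvPolynomial.coeff_mul]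
    apply Finset.sum_congr rfl
    intro x hx
    rw [coeff_homogeneousComponent]
    by_cases hq0 : MvPolynomial.coeff x.2 q = 0
    · rw [hq0, mul_zero, mul_zero]
    · have hx2 : degE x.2 = d := hq x.2 (MvPolynomial.mem_support_iff.mpr hq0)
      have hsum : x.1 + x.2 = γ := Finset.HasAntidiagonal.mem_antidiagonal.mp hx
      have hdeg : degE x.1 + degE x.2 = degE γ := by rw [← degE_add, hsum]
      have h1 : Finsupp.degree x.1 = t := by
        rw [← degE_eq]
        rw [← degE_eq] at h
        omega
      rw [if_pos h1]
  · rw [if_neg h, MvPolynomial.coeff_mul]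
    symm
    apply Finset.sum_eq_zero
    intro x hx
    rw [coeff_homogeneousComponent]
    by_cases hq0 : MvPolynomial.coeff x.2 q = 0
    · rw [hq0, mul_zero]
    · have hx2 : degE x.2 = d := hq x.2 (MvPolynomial.mem_support_iff.mpr hq0)
      have hsum : x.1 + x.2 = γ := Finset.HasAntidiagonal.mem_antidiagonal.mp hx
      have hdeg : degE x.1 + degE x.2 = degE γ := by rw [← degE_add, hsum]
      have h1 : ¬ Finsupp.degree x.1 = t := by
        rw [← degE_eq]
        rw [← degE_eq] at h
        omega
      rw [if_neg h1, zero_mul]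

lemma hc_mul_zero {p q : MvPolynomial (Fin (n+1)) A} {d : ℕ}
    (hq : ∀ b ∈ q.support, degE b = d) {u : ℕ} (hu : u < d) :
    homogeneousComponent u (p * q) = 0 := by
  classical
  apply MvPolynomial.ext
  intro γ
  rw [coeff_homogeneousComponent, MvPolynomial.coeff_zero]
  split_ifs with h
  · rw [MvPolynomial.coeff_mul]
    apply Finset.sum_eq_zero
    intro x hx
    by_cases hq0 : MvPolynomial.coeff x.2 q = 0
    · rw [hq0, mul_zero]
    · exfalso
      have hx2 : degE x.2 = d := hq x.2 (MvPolynomial.mem_support_iff.mpr hq0)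
      have hsum : x.1 + x.2 = γ := Finset.HasAntidiagonal.mem_antidiagonal.mp hx
      have : degE x.1 + degE x.2 = degE γ := by rw [← degE_add, hsum]
      rw [← degE_eq] at h
      omega
  · rfl

end HC

section Main

variable {n : ℕ} {A : Type*} [CommRing A]
variable {T : Set (Exp n)} {P : Finset (Exp n)}
  {g : Exp n → MvPolynomial (Fin (n+1)) A}
  {Pc : ↥P → Fin (n+1) → ↥P → MvPolynomial (Fin (n+1)) A}

lemma Pc_homog (hT : IsMonomialIdeal T) (hP : IsPommaretBasis P T)
    (hG : IsMarkedBasisI T P g)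
    (hPc : ∀ (k : ↥P) (i : Fin (n+1)), ¬ mult (k : Exp n) i →
      (X i * g (k : Exp n) = ∑ l : ↥P, Pc k i l * g (l : Exp n)) ∧
      ∀ l : ↥P, multPoly (l : Exp n) (Pc k i l)) :
    ∀ (k : ↥P) (i : Fin (n+1)), ¬ mult (k : Exp n) i → ∀ (l : ↥P),
    ∀ β ∈ (Pc k i l).support, degE β + degE (l : Exp n) = 1 + degE (k : Exp n) := by
  classical
  intro k i hnm l β hβ
  by_contra hne
  set v := degE β with hv
  set u := v + degE (l : Exp n) with hu
  have hgk : ∀ b ∈ (g ((k : Exp n))).support, degE b = degE (k : Exp n) :=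
    fun b hb => g_homog hG.1 k.2 hb
  have hXg : ∀ b ∈ (X i * g ((k : Exp n))).support, degE b = 1 + degE (k : Exp n) := by
    intro b hb
    rw [MvPolynomial.mem_support_iff, MvPolynomial.coeff_X_mul'] at hb
    split_ifs at hb with hmem
    · have hble : Finsupp.single i 1 ≤ b := by
        rw [Finsupp.single_le_iff]
        rw [Finsupp.mem_support_iff] at hmem
        omega
      have hdg : degE (b - Finsupp.single i 1) = degE (k : Exp n) :=
        hgk _ (MvPolynomial.mem_support_iff.mpr hb)
      have hb' : b - Finsupp.single i 1 + Finsupp.single i 1 = b :=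
        tsub_add_cancel_of_le hble
      calc degE b = degE (b - Finsupp.single i 1 + Finsupp.single i 1) := by rw [hb']
        _ = degE (k : Exp n) + 1 := by rw [degE_add, hdg, degE_single]
        _ = 1 + degE (k : Exp n) := by omega
    · exact absurd rfl hb
  set Hf : ↥P → MvPolynomial (Fin (n+1)) A := fun l' =>
    if degE ((l' : Exp n)) ≤ u then
      homogeneousComponent (u - degE ((l' : Exp n))) (Pc k i l') else 0 with hHf
  have hsum : ∑ l' : ↥P, Hf l' * g ((l' : Exp n)) = 0 := by
    have h1 : ∀ l' : ↥P, Hf l' * g ((l' : Exp n))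
        = homogeneousComponent u (Pc k i l' * g ((l' : Exp n))) := by
      intro l'
      have hgl' : ∀ b ∈ (g ((l' : Exp n))).support, degE b = degE (l' : Exp n) :=
        fun b hb => g_homog hG.1 l'.2 hb
      by_cases hle : degE ((l' : Exp n)) ≤ u
      · rw [hHf]
        simp only [if_pos hle]
        rw [← hc_mul_homog hgl' (u - degE ((l' : Exp n))), Nat.sub_add_cancel hle]
      · rw [hHf]
        simp only [if_neg hle]
        rw [zero_mul, hc_mul_zero hgl' (not_le.mp hle)]
    rw [Finset.sum_congr rfl (fun l' _ => h1 l'), ← map_sum,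
      ← (hPc k i hnm).1, hc_zero_of_degrees hXg]
    omega
  have hmultf : ∀ l' : ↥P, multPoly ((l' : Exp n)) (Hf l') := by
    intro l' b hb
    simp only [hHf] at hb
    by_cases hle : degE ((l' : Exp n)) ≤ u
    · rw [if_pos hle] at hb
      have : MvPolynomial.coeff b (Pc k i l') ≠ 0 := by
        have hcb := MvPolynomial.mem_support_iff.mp hb
        rw [coeff_homogeneousComponent] at hcb
        intro hc
        apply hcb
        split_ifs
        · exact hc
        · rfl
      exact (hPc k i hnm).2 l' b (MvPolynomial.mem_support_iff.mpr this)
    · rw [if_neg hle] at hb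
      simp at hb
  have hHf0 : Hf = 0 := multSyzZero hT hP hG.1 Hf hmultf hsum
  have hcl : MvPolynomial.coeff β (Hf l) = 0 := by rw [hHf0]; rfl
  simp only [hHf, if_pos (Nat.le_add_left (degE ((l : Exp n))) v)] at hcl
  rw [if_pos (show degE (l : Exp n) ≤ u from Nat.le_add_left _ _)] at hcl
  rw [coeff_homogeneousComponent] at hcl
  rw [if_pos] at hcl
  · exact (MvPolynomial.mem_support_iff.mp hβ) hcl
  · rw [← degE_eq]
    omega

lemma Ssyz_supp_deg (hT : IsMonomialIdeal T) (hP : IsPommaretBasis P T)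
    (hG : IsMarkedBasisI T P g)
    (hPc : ∀ (k : ↥P) (i : Fin (n+1)), ¬ mult (k : Exp n) i →
      (X i * g (k : Exp n) = ∑ l : ↥P, Pc k i l * g (l : Exp n)) ∧
      ∀ l : ↥P, multPoly (l : Exp n) (Pc k i l))
    {k : ↥P} {i : Fin (n+1)} (hnm : ¬ mult (k : Exp n) i) (l : ↥P)
    {β : Exp n} (hβ : β ∈ (Ssyz P Pc k i l).support) :
    degE β + degE (l : Exp n) = 1 + degE (k : Exp n) := by
  classical
  rcases mem_support_sub hβ with h | h
  · by_cases hl : l = k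
    · rw [if_pos hl] at h
      have := MvPolynomial.mem_support_iff.mp h
      rw [MvPolynomial.coeff_X'] at this
      split_ifs at this with hb
      · rw [← hb, degE_single, hl]
      · exact absurd rfl this
    · rw [if_neg hl] at h
      simp at h
  · exact Pc_homog hT hP hG hPc k i hnm l β h


lemma Ssyz_ker
    (hPc : ∀ (k : ↥P) (i : Fin (n+1)), ¬ mult (k : Exp n) i →
      (X i * g (k : Exp n) = ∑ l : ↥P, Pc k i l * g (l : Exp n)) ∧
      ∀ l : ↥P, multPoly (l : Exp n) (Pc k i l))
    {k : ↥P} {i : Fin (n+1)} (hnm : ¬ mult (k : Exp n) i) :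
    ∑ l : ↥P, Ssyz P Pc k i l * g ((l : Exp n)) = 0 := by
  classical
  have heq := (hPc k i hnm).1
  have h1 : ∀ l : ↥P, Ssyz P Pc k i l * g ((l : Exp n))
      = (if l = k then X i * g ((l : Exp n)) else 0) - Pc k i l * g ((l : Exp n)) := by
    intro l
    simp only [Ssyz]
    rw [sub_mul]
    congr 1
    split_ifs
    · rfl
    · rw [zero_mul]
  rw [Finset.sum_congr rfl (fun l _ => h1 l), Finset.sum_sub_distrib,
    Finset.sum_ite_eq' Finset.univ k (fun l => X i * g ((l : Exp n))),
    if_pos (Finset.mem_univ k), heq, sub_self]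

lemma corr_ker
    (hPc : ∀ (k : ↥P) (i : Fin (n+1)), ¬ mult (k : Exp n) i →
      (X i * g (k : Exp n) = ∑ l : ↥P, Pc k i l * g (l : Exp n)) ∧
      ∀ l : ↥P, multPoly (l : Exp n) (Pc k i l))
    {k : ↥P} {i : Fin (n+1)} (hnm : ¬ mult (k : Exp n) i) (δ : Exp n) :
    ∑ l : ↥P, ((MvPolynomial.monomial δ (1:A)) • Ssyz P Pc k i) l * g ((l : Exp n)) = 0 := by
  have h1 : ∀ l : ↥P, ((MvPolynomial.monomial δ (1:A)) • Ssyz P Pc k i) l * g ((l : Exp n))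
      = (MvPolynomial.monomial δ (1:A)) * (Ssyz P Pc k i l * g ((l : Exp n))) := by
    intro l
    rw [Pi.smul_apply, smul_eq_mul, mul_assoc]
  rw [Finset.sum_congr rfl (fun l _ => h1 l), ← Finset.mul_sum, Ssyz_ker hPc hnm, mul_zero]

lemma corr_homog (hT : IsMonomialIdeal T) (hP : IsPommaretBasis P T)
    (hG : IsMarkedBasisI T P g)
    (hPc : ∀ (k : ↥P) (i : Fin (n+1)), ¬ mult (k : Exp n) i →
      (X i * g (k : Exp n) = ∑ l : ↥P, Pc k i l * g (l : Exp n)) ∧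
      ∀ l : ↥P, multPoly (l : Exp n) (Pc k i l))
    {k : ↥P} {i : Fin (n+1)} (hnm : ¬ mult (k : Exp n) i) (δ : Exp n) {s : ℤ}
    (hdeg : (degE δ : ℤ) + 1 + ddeg P k = s) :
    ((MvPolynomial.monomial δ (1:A)) • Ssyz P Pc k i) ∈ homogCompV A (ddeg P) s := by
  intro l β hβ
  rw [Pi.smul_apply, smul_eq_mul, MvPolynomial.mem_support_iff,
    MvPolynomial.coeff_monomial_mul'] at hβ
  split_ifs at hβ with hle
  · have hεmem : β - δ ∈ (Ssyz P Pc k i l).support := by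
      rw [MvPolynomial.mem_support_iff]
      intro hc
      rw [hc, mul_zero] at hβ
      exact hβ rfl
    have hε := Ssyz_supp_deg hT hP hG hPc hnm l hεmem
    have hβeq : δ + (β - δ) = β := add_tsub_cancel_of_le hle
    have : degE δ + degE (β - δ) = degE β := by rw [← degE_add, hβeq]
    show (degE β : ℤ) + ddeg P l = s
    rw [ddeg] at hdeg ⊢
    push_cast
    push_cast at hdeg
    have hε' : (degE (β - δ) : ℤ) + (degE ((l : Exp n)) : ℤ)
        = 1 + (degE ((k : Exp n)) : ℤ) := by exact_mod_cast congrArg (Nat.cast : ℕ → ℤ) hε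
    have h2 : (degE δ : ℤ) + (degE (β - δ) : ℤ) = (degE β : ℤ) := by exact_mod_cast this
    linarith
  · exact absurd rfl hβ


lemma Nval_le_bound {D : ℕ} {δ : Exp n} (h : ∀ j, δ j ≤ D) :
    Nval D δ ≤ (n+1) * (D * (D+1)^n) := by
  calc Nval D δ ≤ ∑ _j : Fin (n+1), D * (D+1)^n := by
        apply Finset.sum_le_sum
        intro j _
        exact Nat.mul_le_mul (h j)
          (Nat.pow_le_pow_right (Nat.succ_pos D) (Nat.le_of_lt_succ j.isLt))
    _ = (n+1) * (D * (D+1)^n) := by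
        rw [Finset.sum_const, Finset.card_univ, Fintype.card_fin, smul_eq_mul]

lemma entry_bound {s : ℤ} {γ : Exp n} {l : ↥P}
    (h : (degE γ : ℤ) + ddeg P l = s) : ∀ j, γ j ≤ s.toNat := by
  intro j
  have h0 : (0:ℤ) ≤ ddeg P l := by
    rw [ddeg]
    positivity
  have h1 : (degE γ : ℤ) ≤ s := by linarith
  have h2 : degE γ ≤ s.toNat := by
    omega
  exact le_trans (le_degE γ j) h2

lemma reduce (hT : IsMonomialIdeal T) (hP : IsPommaretBasis P T)
    (hG : IsMarkedBasisI T P g)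
    (hPc : ∀ (k : ↥P) (i : Fin (n+1)), ¬ mult (k : Exp n) i →
      (X i * g (k : Exp n) = ∑ l : ↥P, Pc k i l * g (l : Exp n)) ∧
      ∀ l : ↥P, multPoly (l : Exp n) (Pc k i l))
    (s : ℤ) (m : ℕ) :
    ∀ H : ↥P → MvPolynomial (Fin (n+1)) A,
    (∑ l : ↥P, H l * g ((l : Exp n)) = 0) → IsHomogV (ddeg P) H s →
    (∀ (l : ↥P) (γ : Exp n), γ ∈ (H l).support → γ ∈ Jsyz P l →
      Nval s.toNat (mpart γ) < m) →
    H ∈ Submodule.span A (GSyzDeg P Pc s) := by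
  classical
  induction m with
  | zero =>
    intro H hker hhom hbound
    have hmult : ∀ l : ↥P, multPoly ((l : Exp n)) (H l) := by
      intro l γ hγ j hj
      by_contra hc
      exact absurd (hbound l γ hγ ⟨j, hj, hc⟩) (Nat.not_lt_zero _)
    rw [multSyzZero hT hP hG.1 H hmult hker]
    exact Submodule.zero_mem _
  | succ m ih =>
    intro H hker hhom hbound
    set D := s.toNat with hD
    -- the set of bad (nonmultiplicative) positions
    set Bad : Finset (↥P × Exp n) := Finset.univ.biUnion
      (fun k : ↥P => ((H k).support.filter (fun γ => γ ∈ Jsyz P k)).image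
        (fun γ => (k, γ))) with hBad
    have mem_Bad : ∀ p : ↥P × Exp n,
        p ∈ Bad ↔ p.2 ∈ (H p.1).support ∧ p.2 ∈ Jsyz P p.1 := by
      intro p
      constructor
      · intro hp
        obtain ⟨k, -, hk⟩ := Finset.mem_biUnion.mp hp
        obtain ⟨γ, hγ, hγp⟩ := Finset.mem_image.mp hk
        obtain ⟨h1, h2⟩ := Finset.mem_filter.mp hγ
        rw [← hγp]
        exact ⟨h1, h2⟩
      · intro ⟨h1, h2⟩
        exact Finset.mem_biUnion.mpr ⟨p.1, Finset.mem_univ _,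
          Finset.mem_image.mpr ⟨p.2, Finset.mem_filter.mpr ⟨h1, h2⟩, rfl⟩⟩
    have bad_ne : ∀ p ∈ Bad, (p.2).support.Nonempty := by
      intro p hp
      obtain ⟨-, i, hi, -⟩ := (mem_Bad p).mp hp
      exact ⟨i, hi⟩
    have bad_nm : ∀ p ∈ Bad, ¬ mult ((p.1 : Exp n)) (tvar p.2) := by
      intro p hp
      obtain ⟨-, i, hi, hnm⟩ := (mem_Bad p).mp hp
      exact tvar_nonmult hi hnm
    have bad_deg : ∀ p ∈ Bad, (degE (mpart p.2) : ℤ) + 1 + ddeg P p.1 = s := by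
      intro p hp
      have h1 := hhom p.1 p.2 ((mem_Bad p).mp hp).1
      have h2 := degE_mpart (bad_ne p hp)
      rw [← h1]
      push_cast [← h2]
      ring
    -- the correction
    set corr : ↥P × Exp n → (↥P → MvPolynomial (Fin (n+1)) A) :=
      fun p => (MvPolynomial.monomial (mpart p.2) (1:A)) • Ssyz P Pc p.1 (tvar p.2)
      with hcorr
    have corr_mem : ∀ p ∈ Bad, corr p ∈ GSyzDeg P Pc s := by
      intro p hp
      exact ⟨p.1, tvar p.2, bad_nm p hp, mpart p.2, fun j hj => supp_mpart_le (bad_ne p hp) hj,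
        bad_deg p hp, rfl⟩
    set H' : ↥P → MvPolynomial (Fin (n+1)) A :=
      H - ∑ p ∈ Bad, (MvPolynomial.coeff p.2 (H p.1)) • corr p with hH'
    have hH'apply : ∀ l : ↥P, H' l
        = H l - ∑ p ∈ Bad, (MvPolynomial.coeff p.2 (H p.1)) • corr p l := by
      intro l
      rw [hH', Pi.sub_apply, Finset.sum_apply]
      rfl
    -- H' is in the kernel
    have hH'ker : ∑ l : ↥P, H' l * g ((l : Exp n)) = 0 := by
      have h1 : ∀ l : ↥P, H' l * g ((l : Exp n)) = H l * g ((l : Exp n))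
          - ∑ p ∈ Bad, (MvPolynomial.coeff p.2 (H p.1)) • (corr p l * g ((l : Exp n))) := by
        intro l
        rw [hH'apply, sub_mul, Finset.sum_mul]
        congr 1
        exact Finset.sum_congr rfl (fun p _ => smul_mul_assoc _ _ _)
      rw [Finset.sum_congr rfl (fun l _ => h1 l), Finset.sum_sub_distrib, hker,
        Finset.sum_comm, zero_sub, neg_eq_zero]
      apply Finset.sum_eq_zero
      intro p hp
      rw [← Finset.smul_sum, corr_ker hPc (bad_nm p hp), smul_zero]
    -- H' is homogeneous
    have hH'mem : H' ∈ homogCompV A (ddeg P) s := by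
      rw [hH']
      apply Submodule.sub_mem
      · exact hhom
      · apply Submodule.sum_mem
        intro p hp
        exact Submodule.smul_mem _ _ (corr_homog hT hP hG hPc (bad_nm p hp) _ (bad_deg p hp))
    have hH'hom : IsHomogV (ddeg P) H' s := hH'mem
    -- coefficients of corrections
    have corr_coeff : ∀ p ∈ Bad, ∀ (l : ↥P) (γ' : Exp n),
        MvPolynomial.coeff γ' (corr p l)
        = (if (l, γ') = p then (1:A) else 0)
          - (if mpart p.2 ≤ γ' then
              MvPolynomial.coeff (γ' - mpart p.2) (Pc p.1 (tvar p.2) l) else 0) := by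
      intro p hp l γ'
      have hc1 : corr p l = MvPolynomial.monomial (mpart p.2) (1:A)
          * ((if l = p.1 then X (tvar p.2) else 0) - Pc p.1 (tvar p.2) l) := by
        rw [hcorr]
        simp only [Pi.smul_apply, smul_eq_mul, Ssyz]
      rw [hc1, mul_sub, MvPolynomial.coeff_sub]
      congr 1
      · by_cases hl : l = p.1
        · rw [if_pos hl]
          have : MvPolynomial.monomial (mpart p.2) (1:A) * X (tvar p.2)
              = MvPolynomial.monomial p.2 (1:A) := by
            rw [X, MvPolynomial.monomial_mul, mul_one, mpart_add (bad_ne p hp)]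
          rw [this, MvPolynomial.coeff_monomial]
          by_cases hg : γ' = p.2
          · rw [if_pos hg.symm, if_pos (Prod.ext hl hg)]
          · rw [if_neg (fun hc => hg hc.symm), if_neg]
            intro hc
            exact hg (congrArg Prod.snd hc)
        · rw [if_neg hl, mul_zero, MvPolynomial.coeff_zero, if_neg]
          intro hc
          exact hl (congrArg Prod.fst hc)
      · rw [MvPolynomial.coeff_monomial_mul']
        split_ifs with h
        · rw [one_mul]
        · rfl
    -- coefficient of H' at a bad position
    have key : ∀ (l : ↥P) (γ' : Exp n), γ' ∈ Jsyz P l →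
        MvPolynomial.coeff γ' (H' l)
        = ∑ p ∈ Bad, MvPolynomial.coeff p.2 (H p.1) *
            (if mpart p.2 ≤ γ' then
              MvPolynomial.coeff (γ' - mpart p.2) (Pc p.1 (tvar p.2) l) else 0) := by
      intro l γ' hγ'
      rw [hH'apply, MvPolynomial.coeff_sub, MvPolynomial.coeff_sum]
      have h1 : ∀ p ∈ Bad, MvPolynomial.coeff γ'
          ((MvPolynomial.coeff p.2 (H p.1)) • corr p l)
          = MvPolynomial.coeff p.2 (H p.1) * (if (l, γ') = p then (1:A) else 0)
            - MvPolynomial.coeff p.2 (H p.1) *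
              (if mpart p.2 ≤ γ' then
                MvPolynomial.coeff (γ' - mpart p.2) (Pc p.1 (tvar p.2) l) else 0) := by
        intro p hp
        rw [MvPolynomial.coeff_smul, corr_coeff p hp l γ', smul_eq_mul, mul_sub]
      rw [Finset.sum_congr rfl h1, Finset.sum_sub_distrib]
      have h2 : ∑ p ∈ Bad, MvPolynomial.coeff p.2 (H p.1) * (if (l, γ') = p then (1:A) else 0)
          = if (l, γ') ∈ Bad then MvPolynomial.coeff γ' (H l) else 0 := by
        rw [Finset.sum_congr rfl (fun p _ => by rw [mul_ite, mul_one, mul_zero]),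
          Finset.sum_ite_eq]
      rw [h2]
      have h3 : MvPolynomial.coeff γ' (H l)
          - (if (l, γ') ∈ Bad then MvPolynomial.coeff γ' (H l) else 0) = 0 := by
        by_cases hb : (l, γ') ∈ Bad
        · rw [if_pos hb, sub_self]
        · rw [if_neg hb, sub_zero]
          by_contra hc
          exact hb ((mem_Bad (l, γ')).mpr
            ⟨MvPolynomial.mem_support_iff.mpr hc, hγ'⟩)
      linear_combination h3
    -- the improved bound for H'
    have hbound' : ∀ (l : ↥P) (γ' : Exp n), γ' ∈ (H' l).support → γ' ∈ Jsyz P l →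
        Nval D (mpart γ') < m := by
      intro l γ' hsupp hbad
      have hc := MvPolynomial.mem_support_iff.mp hsupp
      rw [key l γ' hbad] at hc
      obtain ⟨p, hp, hpne⟩ := Finset.exists_ne_zero_of_sum_ne_zero hc
      have hle : mpart p.2 ≤ γ' := by
        by_contra hle
        rw [if_neg hle, mul_zero] at hpne
        exact hpne rfl
      rw [if_pos hle] at hpne
      have hPcne : MvPolynomial.coeff (γ' - mpart p.2) (Pc p.1 (tvar p.2) l) ≠ 0 := by
        intro h0
        rw [h0, mul_zero] at hpne
        exact hpne rfl
      have hεsupp : γ' - mpart p.2 ∈ (Pc p.1 (tvar p.2) l).support :=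
        MvPolynomial.mem_support_iff.mpr hPcne
      have hεmult : multExp ((l : Exp n)) (γ' - mpart p.2) :=
        (hPc p.1 (tvar p.2) (bad_nm p hp)).2 l _ hεsupp
      have hne' : γ'.support.Nonempty := by
        obtain ⟨i, hi, -⟩ := hbad
        exact ⟨i, hi⟩
      have heq : mpart p.2 + (γ' - mpart p.2)
          = mpart γ' + Finsupp.single (tvar γ') 1 := by
        rw [add_tsub_cancel_of_le hle, mpart_add hne']
      have hlex : lexLt (mpart γ') (mpart p.2) := by
        by_contra hn
        have hm : ∀ j ∈ (mpart γ').support,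
            ∀ j' ∈ (Finsupp.single (tvar γ') (1:ℕ)).support, j ≤ j' := by
          intro j hj j' hj'
          have h5 := Finsupp.support_single_subset hj'
          rw [Finset.mem_singleton] at h5
          rw [h5]
          exact supp_mpart_le hne' hj
        obtain ⟨ρ, hρ⟩ := keyL heq hm hn
        have h1 : (γ' - mpart p.2) (tvar γ') ≠ 0 := by
          rw [hρ]
          simp [Finsupp.add_apply, Finsupp.single_apply]
        have h2 : mult ((l : Exp n)) (tvar γ') :=
          hεmult _ (Finsupp.mem_support_iff.mpr h1)
        obtain ⟨i, hi, hinm⟩ := hbad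
        exact tvar_nonmult hi hinm h2
      have hD1 : ∀ j, mpart γ' j ≤ D := by
        intro j
        have h6 := entry_bound (hH'hom l γ' hsupp) j
        exact le_trans (mpart_apply_le γ' j) h6
      have hlt : Nval D (mpart γ') < Nval D (mpart p.2) :=
        Nval_lt_of_lexLt hD1 hlex
      have hp2 := (mem_Bad p).mp hp
      have h7 := hbound p.1 p.2 hp2.1 hp2.2
      omega
    have hH'span := ih H' hH'ker hH'hom hbound'
    have hfinal : H = H' + ∑ p ∈ Bad, (MvPolynomial.coeff p.2 (H p.1)) • corr p := by
      rw [hH', sub_add_cancel]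
    rw [hfinal]
    apply Submodule.add_mem
    · exact hH'span
    · apply Submodule.sum_mem
      intro p hp
      exact Submodule.smul_mem _ _ (Submodule.subset_span (corr_mem p hp))

end Main






/-- Lemma `syzgen`: for every degree `s`, the set `G_Syz^(s)` generates the
`A`-module `Syz(G)_s` of degree-`s` syzygies of the marked basis `G`. -/
theorem statement17 {n : ℕ} {A : Type*} [CommRing A] [IsNoetherianRing A]
    (T : Set (Exp n)) (P : Finset (Exp n))
    (hT : IsMonomialIdeal T) (hP : IsPommaretBasis P T)
    (g : Exp n → MvPolynomial (Fin (n+1)) A) (hG : IsMarkedBasisI T P g)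
    (Pc : ↥P → Fin (n+1) → ↥P → MvPolynomial (Fin (n+1)) A)
    (hPc : ∀ (k : ↥P) (i : Fin (n+1)), ¬ mult (k : Exp n) i →
      (X i * g (k : Exp n) = ∑ l : ↥P, Pc k i l * g (l : Exp n)) ∧
      ∀ l : ↥P, multPoly (l : Exp n) (Pc k i l)) :
    ∀ s : ℤ,
      (LinearMap.ker (syzMap P g)).restrictScalars A ⊓ homogCompV A (ddeg P) s
        = Submodule.span A (GSyzDeg P Pc s) := by
  classical
  intro s
  apply le_antisymm
  · intro H hH
    obtain ⟨hker, hhom⟩ := Submodule.mem_inf.mp hH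
    rw [Submodule.restrictScalars_mem, LinearMap.mem_ker] at hker
    have hker' : ∑ l : ↥P, H l * g ((l : Exp n)) = 0 := hker
    have hhom' : IsHomogV (ddeg P) H s := hhom
    apply reduce hT hP hG hPc s ((n+1) * (s.toNat * (s.toNat+1)^n) + 1) H hker' hhom'
    intro l γ hγ hbad
    have hbnd : ∀ j, mpart γ j ≤ s.toNat := fun j =>
      le_trans (mpart_apply_le γ j) (entry_bound (hhom' l γ hγ) j)
    have hb2 := Nval_le_bound hbnd
    omega
  · rw [Submodule.span_le]
    intro v hv
    obtain ⟨k, i, hnm, δ, hδ, hdeg, rfl⟩ := hv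
    rw [SetLike.mem_coe, Submodule.mem_inf]
    constructor
    · rw [Submodule.restrictScalars_mem, LinearMap.mem_ker]
      show ∑ l : ↥P, ((MvPolynomial.monomial δ (1:A)) • Ssyz P Pc k i) l * g ((l : Exp n)) = 0
      exact corr_ker hPc hnm δ
    · exact corr_homog hT hP hG hPc hnm δ hdeg

end MB
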